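/- Let V be a finite-dimensional real vector space, ω¹,…,ωᵏ skew-symmetric bilinear forms on V with ⋂_A Ker(ωᴬ) = {0}, and D ⊆ V a subspace of dimension r with D ∩ D^⊥ = {0}, where D^⊥ = ⋂_{A=1}^k (ωᴬ)♭⁻¹(D°). Define S = {ᾱ ∈ (V*)ᵏ : ∃ X ∈ D with ᾱ|_D = ω̄♭(X)|_D}. Then the restriction map D → (D*)ᵏ, X ↦ ω̄♭(X)|_D, is injective, and dim S = r + (dim V − r)·k. -/
import Mathlib
set_option maxHeartbeats 4000000
set_option synthInstance.maxHeartbeats 2000000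


private lemma finrank_comap_aux {V W : Type*} [AddCommGroup V] [Module ℝ V]
    [FiniteDimensional ℝ V] [AddCommGroup W] [Module ℝ W] [FiniteDimensional ℝ W]
    (Φ : V →ₗ[ℝ] W) (hΦ : Function.Surjective Φ) (P : Submodule ℝ W) :
    Module.finrank ℝ (Submodule.comap Φ P)
      = Module.finrank ℝ P + Module.finrank ℝ (LinearMap.ker Φ) := by
  have hmem : ∀ x ∈ Submodule.comap Φ P, Φ x ∈ P := fun x hx => hx
  set g : (Submodule.comap Φ P) →ₗ[ℝ] P := Φ.restrict hmem with hg
  have hgsurj : Function.Surjective g := by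
    rintro ⟨p, hp⟩
    obtain ⟨α, hα⟩ := hΦ p
    exact ⟨⟨α, by simp [Submodule.mem_comap, hα, hp]⟩, Subtype.ext hα⟩
  have hgker : Module.finrank ℝ (LinearMap.ker g) = Module.finrank ℝ (LinearMap.ker Φ) := by
    rw [hg, LinearMap.ker_restrict]
    have hle : LinearMap.ker Φ ≤ Submodule.comap Φ P := by
      intro x hx
      rw [LinearMap.mem_ker] at hx
      simp [Submodule.mem_comap, hx]
    rw [(Submodule.comapSubtypeEquivOfLe hle).finrank_eq]
  have h2 := LinearMap.finrank_range_add_finrank_ker g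
  rw [LinearMap.range_eq_top.mpr hgsurj, finrank_top, hgker] at h2
  exact h2.symm

/-- in the Dirac-type construction, the map D → (D*)ᵏ, X ↦ ω̄♭(X)|_D is
injective, and the subspace S = {ᾱ : ᾱ|_D = ω̄♭(X)|_D for some X ∈ D} has dimension
r + (dim V − r)·k. -/
theorem stmt_12 (V : Type*) [AddCommGroup V] [Module ℝ V] [FiniteDimensional ℝ V]
    (k r : ℕ) (ω : Fin k → LinearMap.BilinForm ℝ V)
    (hskew : ∀ A (x y : V), ω A x y = - ω A y x)
    (hnd : ∀ x : V, (∀ A (y : V), ω A x y = 0) → x = 0)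
    (D : Submodule ℝ V) (hr : Module.finrank ℝ D = r)
    -- D ∩ D^⊥ = {0}, with D^⊥ = ⋂_A (ωᴬ♭)⁻¹(D°)
    (hD : ∀ v ∈ D, (∀ A, ∀ d ∈ D, ω A v d = 0) → v = 0) :
    (∀ X ∈ D, ∀ Y ∈ D, (∀ A, ∀ d ∈ D, ω A X d = ω A Y d) → X = Y) ∧
    Set.finrank ℝ
        {α : Fin k → Module.Dual ℝ V | ∃ X ∈ D, ∀ A, ∀ d ∈ D, α A d = ω A X d}
      = r + (Module.finrank ℝ V - r) * k := by
  have hinj : ∀ X ∈ D, ∀ Y ∈ D, (∀ A, ∀ d ∈ D, ω A X d = ω A Y d) → X = Y := by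
    intro X hX Y hY h
    have : X - Y = 0 := by
      refine hD _ (D.sub_mem hX hY) (fun A d hd => ?_)
      simp [map_sub, h A d hd]
    exact sub_eq_zero.mp this
  refine ⟨hinj, ?_⟩
  classical
  set n := Module.finrank ℝ V
  -- the restriction map Φ : (V*)^k → (D*)^k
  set Φ : (Fin k → Module.Dual ℝ V) →ₗ[ℝ] (Fin k → Module.Dual ℝ D) :=
    LinearMap.pi (fun A => D.dualRestrict.comp (LinearMap.proj A)) with hΦ
  -- the map ψ : D → (D*)^k
  set ψ : D →ₗ[ℝ] (Fin k → Module.Dual ℝ D) :=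
    LinearMap.pi (fun A => D.dualRestrict ∘ₗ (ω A ∘ₗ D.subtype)) with hψ
  have hΦ_apply : ∀ α A (d : D), Φ α A d = α A d := fun _ _ _ => rfl
  have hψ_apply : ∀ (X : D) A (d : D), ψ X A d = ω A (X : V) (d : V) := fun _ _ _ => rfl
  -- the set S is the submodule comap Φ (range ψ)
  have hset : {α : Fin k → Module.Dual ℝ V | ∃ X ∈ D, ∀ A, ∀ d ∈ D, α A d = ω A X d}
      = ↑(Submodule.comap Φ (LinearMap.range ψ)) := by
    ext α
    simp only [Set.mem_setOf_eq, SetLike.mem_coe, Submodule.mem_comap, LinearMap.mem_range]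
    constructor
    · rintro ⟨X, hX, h⟩
      exact ⟨⟨X, hX⟩, by funext A; ext d; exact (h A d d.2).symm⟩
    · rintro ⟨X, h⟩
      refine ⟨(X : V), X.2, fun A d hd => ?_⟩
      have := congrFun h A
      have := congrFun (congrArg DFunLike.coe this) ⟨d, hd⟩
      exact this.symm
  rw [hset]
  have hspan : Submodule.span ℝ ((Submodule.comap Φ (LinearMap.range ψ)) :
      Set (Fin k → Module.Dual ℝ V)) = Submodule.comap Φ (LinearMap.range ψ) :=
    Submodule.span_eq _
  unfold Set.finrank
  rw [hspan]
  -- ψ is injective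
  have hψinj : Function.Injective ψ := by
    rw [← LinearMap.ker_eq_bot, Submodule.eq_bot_iff]
    intro X hX
    rw [LinearMap.mem_ker] at hX
    have hX0 : (X : V) = 0 := by
      refine hD _ X.2 (fun A d hd => ?_)
      have := congrFun hX A
      have := congrFun (congrArg DFunLike.coe this) ⟨d, hd⟩
      exact this
    exact Subtype.ext hX0
  -- Φ is surjective
  have hΦsurj : Function.Surjective Φ := by
    intro β
    refine ⟨fun A => (Subspace.dualRestrict_surjective (β A)).choose, ?_⟩
    funext A
    exact (Subspace.dualRestrict_surjective (β A)).choose_spec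
  -- dimension of ker Φ
  have hrle : r ≤ n := by rw [← hr]; exact Submodule.finrank_le D
  have hdualV : Module.finrank ℝ (Module.Dual ℝ V) = n := Subspace.dual_finrank_eq
  have hdualD : Module.finrank ℝ (Module.Dual ℝ D) = r := by
    rw [Subspace.dual_finrank_eq, hr]
  have hdomain : Module.finrank ℝ (Fin k → Module.Dual ℝ V) = n * k := by
    rw [Module.finrank_pi_fintype, Finset.sum_const, Finset.card_univ, Fintype.card_fin,
      smul_eq_mul]
    rw [hdualV, mul_comm]
  have hcodomain : Module.finrank ℝ (Fin k → Module.Dual ℝ D) = r * k := by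
    rw [Module.finrank_pi_fintype, Finset.sum_const, Finset.card_univ, Fintype.card_fin,
      smul_eq_mul]
    rw [hdualD, mul_comm]
  have hkerΦ : Module.finrank ℝ (LinearMap.ker Φ) = n * k - r * k := by
    have h1 := LinearMap.finrank_range_add_finrank_ker Φ
    rw [LinearMap.range_eq_top.mpr hΦsurj, finrank_top, hdomain, hcodomain] at h1
    omega
  -- conclude
  set P := LinearMap.range ψ
  have hP : Module.finrank ℝ P = r := by
    rw [LinearMap.finrank_range_of_inj hψinj, hr]
  have h2 := finrank_comap_aux Φ hΦsurj P
  rw [hP, hkerΦ] at h2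
  rw [h2, Nat.sub_mul]
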